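/- Fix d ≥ 1. There is a constant C = C(d) such that for every h > 0, every t > 0, every 1 ≤ i ≤ d and either sign σ ∈ {+,−}, the first differences of the d-dimensional discrete heat kernel satisfy h^d ∑_{j∈ℤ^d} |(D_{σi} Φ^h(t))_j| ≤ C t^{−1/2}. -/

import Mathlib

noncomputable section

/-- The `k`-th term of the series defining the one-dimensional discrete heat kernel. -/
def wterm (h : ℝ) (j : ℤ) (t : ℝ) (k : ℕ) : ℝ :=
  if j ≤ (k : ℤ) then
    (t / h ^ 2) ^ (2 * (k : ℤ) - j).toNat /
      ((((k : ℤ) - j).toNat.factorial : ℝ) * (k.factorial : ℝ))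
  else 0

/-- The one-dimensional discrete heat kernel. -/
def wker (h : ℝ) (j : ℤ) (t : ℝ) : ℝ :=
  (1 / h) * Real.exp (-2 * t / h ^ 2) * ∑' k : ℕ, wterm h j t k

/-- The `d`-dimensional discrete heat kernel `Φ^h_j(t) = ∏_{i=1}^d w^h_{j_i}(t)`. -/
def Phiker (h : ℝ) {d : ℕ} (j : Fin d → ℤ) (t : ℝ) : ℝ :=
  ∏ i : Fin d, wker h (j i) t

/-- Unit lattice vector in direction `i`. -/
def gunit {d : ℕ} (i : Fin d) : Fin d → ℤ := fun k => if k = i then 1 else 0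

/-- Forward difference operator `D_{+i}`. -/
def fdiff {d : ℕ} {E : Type*} [NormedAddCommGroup E] [NormedSpace ℝ E]
    (h : ℝ) (i : Fin d) (u : (Fin d → ℤ) → E) : (Fin d → ℤ) → E :=
  fun j => (h⁻¹ : ℝ) • (u (j + gunit i) - u j)

/-- Backward difference operator `D_{−i}`. -/
def bdiff {d : ℕ} {E : Type*} [NormedAddCommGroup E] [NormedSpace ℝ E]
    (h : ℝ) (i : Fin d) (u : (Fin d → ℤ) → E) : (Fin d → ℤ) → E :=
  fun j => (h⁻¹ : ℝ) • (u j - u (j - gunit i))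

namespace DHK



/-- Poisson pmf with parameter `τ`. -/
def q (τ : ℝ) (k : ℕ) : ℝ := Real.exp (-τ) * τ ^ k / k.factorial

/-- Poisson pmf extended by zero to `ℤ`. -/
def Q (τ : ℝ) (m : ℤ) : ℝ := if 0 ≤ m then q τ m.toNat else 0

variable {τ : ℝ}

lemma q_nonneg (hτ : 0 ≤ τ) (k : ℕ) : 0 ≤ q τ k := by
  unfold q; positivity

lemma Q_nonneg (hτ : 0 ≤ τ) (m : ℤ) : 0 ≤ Q τ m := by
  unfold Q; split
  · exact q_nonneg hτ _
  · exact le_refl 0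

lemma summable_q : Summable (q τ) := by
  have := (Real.summable_pow_div_factorial τ).mul_left (Real.exp (-τ))
  refine this.congr fun k => ?_
  simp [q, mul_div_assoc]

lemma tsum_q : ∑' k, q τ k = 1 := by
  have h : ∑' k : ℕ, τ ^ k / (k.factorial : ℝ) = Real.exp τ := by
    rw [Real.exp_eq_exp_ℝ, NormedSpace.exp_eq_tsum_div]
  calc ∑' k, q τ k = Real.exp (-τ) * ∑' k : ℕ, τ ^ k / (k.factorial : ℝ) := by
        rw [← tsum_mul_left]
        exact tsum_congr fun k => by simp [q, mul_div_assoc]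
    _ = 1 := by rw [h, ← Real.exp_add]; simp

lemma q_le_one (hτ : 0 ≤ τ) (k : ℕ) : q τ k ≤ 1 :=
  (Summable.le_tsum summable_q k fun j _ => q_nonneg hτ j).trans (le_of_eq tsum_q)

lemma Q_le_one (hτ : 0 ≤ τ) (m : ℤ) : Q τ m ≤ 1 := by
  unfold Q; split
  · exact q_le_one hτ _
  · exact zero_le_one

lemma q_succ_mul (k : ℕ) : ((k : ℝ) + 1) * q τ (k + 1) = τ * q τ k := by
  unfold q
  rw [Nat.factorial_succ]
  have h1 : ((k + 1) * k.factorial : ℕ) ≠ 0 := by positivity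
  have h2 : (k.factorial : ℝ) ≠ 0 := by positivity
  push_cast
  field_simp
  ring

lemma summable_mul_q : Summable (fun k : ℕ => (k : ℝ) * q τ k) := by
  rw [← summable_nat_add_iff 1]
  have : (fun n : ℕ => ((n + 1 : ℕ) : ℝ) * q τ (n + 1)) = fun n : ℕ => τ * q τ n := by
    funext n; push_cast; exact q_succ_mul n
  exact this ▸ summable_q.mul_left τ

lemma tsum_mul_q : ∑' k : ℕ, (k : ℝ) * q τ k = τ := by
  rw [Summable.tsum_eq_zero_add summable_mul_q]
  have : (fun n : ℕ => ((n + 1 : ℕ) : ℝ) * q τ (n + 1)) = fun n : ℕ => τ * q τ n := by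
    funext n; push_cast; exact q_succ_mul n
  simp only [Nat.cast_zero, zero_mul, zero_add]
  have : ∑' (b : ℕ), ((b + 1 : ℕ) : ℝ) * q τ (b + 1) = ∑' (b : ℕ), τ * q τ b := by
    refine tsum_congr fun b => ?_; push_cast; exact q_succ_mul b
  rw [this, tsum_mul_left, tsum_q, mul_one]

lemma q_succ_succ_mul (k : ℕ) :
    ((k : ℝ) + 2) * (((k : ℝ) + 1)) * q τ (k + 2) = τ ^ 2 * q τ k := by
  have h1 := q_succ_mul (τ := τ) (k + 1)
  have h2 := q_succ_mul (τ := τ) k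
  push_cast at h1
  calc ((k : ℝ) + 2) * ((k : ℝ) + 1) * q τ (k + 2)
      = ((k : ℝ) + 1) * ((((k : ℝ) + 1) + 1) * q τ ((k + 1) + 1)) := by ring_nf
    _ = ((k : ℝ) + 1) * (τ * q τ (k + 1)) := by rw [h1]
    _ = τ * (((k : ℝ) + 1) * q τ (k + 1)) := by ring
    _ = τ ^ 2 * q τ k := by rw [h2]; ring

lemma summable_sq_q : Summable (fun k : ℕ => (k : ℝ) * ((k : ℝ) - 1) * q τ k) := by
  rw [← summable_nat_add_iff 2]
  have : (fun n : ℕ => ((n + 2 : ℕ) : ℝ) * (((n + 2 : ℕ) : ℝ) - 1) * q τ (n + 2))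
      = fun n : ℕ => τ ^ 2 * q τ n := by
    funext n; push_cast
    rw [← q_succ_succ_mul n]; ring
  exact this ▸ summable_q.mul_left (τ ^ 2)

lemma tsum_sq_q : ∑' k : ℕ, (k : ℝ) * ((k : ℝ) - 1) * q τ k = τ ^ 2 := by
  have hs := summable_sq_q (τ := τ)
  rw [Summable.tsum_eq_zero_add hs]
  have hs1 : Summable (fun n : ℕ => ((n + 1 : ℕ) : ℝ) * (((n + 1 : ℕ) : ℝ) - 1) * q τ (n + 1)) :=
    (summable_nat_add_iff 1).2 hs
  rw [Summable.tsum_eq_zero_add hs1]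
  simp only [Nat.cast_zero, Nat.cast_one, zero_mul, zero_add, Nat.cast_add]
  have : ∑' (b : ℕ), ((b : ℝ) + 1 + 1) * ((b : ℝ) + 1 + 1 - 1) * q τ (b + 1 + 1)
      = ∑' (b : ℕ), τ ^ 2 * q τ b := by
    refine tsum_congr fun b => ?_
    rw [← q_succ_succ_mul b]; ring_nf
  rw [this, tsum_mul_left, tsum_q, mul_one]
  norm_num

lemma summable_var_q : Summable (fun k : ℕ => q τ k * ((k : ℝ) - τ) ^ 2) := by
  have : (fun k : ℕ => q τ k * ((k : ℝ) - τ) ^ 2)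
      = fun k : ℕ => (k : ℝ) * ((k : ℝ) - 1) * q τ k
          + ((1 - 2 * τ) * ((k : ℝ) * q τ k) + τ ^ 2 * q τ k) := by
    funext k; ring
  rw [this]
  exact summable_sq_q.add ((summable_mul_q.mul_left _).add (summable_q.mul_left _))

lemma tsum_var_q : ∑' k : ℕ, q τ k * ((k : ℝ) - τ) ^ 2 = τ := by
  have hrw : (fun k : ℕ => q τ k * ((k : ℝ) - τ) ^ 2)
      = fun k : ℕ => (k : ℝ) * ((k : ℝ) - 1) * q τ k
          + ((1 - 2 * τ) * ((k : ℝ) * q τ k) + τ ^ 2 * q τ k) := by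
    funext k; ring
  rw [hrw, Summable.tsum_add summable_sq_q ((summable_mul_q.mul_left _).add (summable_q.mul_left _)),
    Summable.tsum_add (summable_mul_q.mul_left _) (summable_q.mul_left _),
    tsum_sq_q, tsum_mul_left, tsum_mul_left, tsum_mul_q, tsum_q]
  ring

lemma abs_le_aux {x s : ℝ} (hs : 0 < s) : |x| ≤ (x ^ 2 + s ^ 2) / (2 * s) := by
  rw [le_div_iff₀ (by positivity)]
  nlinarith [sq_nonneg (|x| - s), sq_abs x, abs_nonneg x]

lemma abs_pointwise (hτ : 0 < τ) (k : ℕ) :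
    q τ k * |(k : ℝ) - τ| ≤
      (q τ k * ((k : ℝ) - τ) ^ 2 + τ * q τ k) / (2 * Real.sqrt τ) := by
  have hs : 0 < Real.sqrt τ := Real.sqrt_pos.2 hτ
  have h1 := abs_le_aux (x := (k : ℝ) - τ) hs
  rw [Real.sq_sqrt hτ.le] at h1
  have hq := q_nonneg hτ.le k
  calc q τ k * |(k : ℝ) - τ| ≤ q τ k * ((((k : ℝ) - τ) ^ 2 + τ) / (2 * Real.sqrt τ)) :=
        mul_le_mul_of_nonneg_left h1 hq
    _ = (q τ k * ((k : ℝ) - τ) ^ 2 + τ * q τ k) / (2 * Real.sqrt τ) := by ring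

lemma summable_abs_q (hτ : 0 < τ) : Summable (fun k : ℕ => q τ k * |(k : ℝ) - τ|) := by
  refine Summable.of_nonneg_of_le
    (fun k => mul_nonneg (q_nonneg hτ.le k) (abs_nonneg _)) (abs_pointwise hτ)
    (((summable_var_q.add (summable_q.mul_left τ))).div_const _)

lemma tsum_abs_q (hτ : 0 < τ) : ∑' k : ℕ, q τ k * |(k : ℝ) - τ| ≤ Real.sqrt τ := by
  have hs : 0 < Real.sqrt τ := Real.sqrt_pos.2 hτ
  have hb : Summable (fun k : ℕ => (q τ k * ((k : ℝ) - τ) ^ 2 + τ * q τ k) / (2 * Real.sqrt τ)) :=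
    ((summable_var_q.add (summable_q.mul_left τ))).div_const _
  have h1 : ∑' k : ℕ, q τ k * |(k : ℝ) - τ|
      ≤ ∑' k : ℕ, (q τ k * ((k : ℝ) - τ) ^ 2 + τ * q τ k) / (2 * Real.sqrt τ) :=
    Summable.tsum_le_tsum (abs_pointwise hτ) (summable_abs_q hτ) hb
  have h2 : ∑' k : ℕ, (q τ k * ((k : ℝ) - τ) ^ 2 + τ * q τ k) / (2 * Real.sqrt τ)
      = (τ + τ * 1) / (2 * Real.sqrt τ) := by
    rw [tsum_div_const, Summable.tsum_add summable_var_q (summable_q.mul_left τ), tsum_var_q,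
      tsum_mul_left, tsum_q]
  rw [h2] at h1
  refine h1.trans (le_of_eq ?_)
  rw [mul_one, ← Real.mul_self_sqrt hτ.le]
  field_simp
  ring_nf
  rw [Real.sq_sqrt hτ.le]
  rw [Real.sq_sqrt hτ.le]

/-- `h`-normalized 1D kernel: equals `h * wker h j t`. -/
def wI (h t : ℝ) (j : ℤ) : ℝ := ∑' k : ℕ, q (t / h ^ 2) k * Q (t / h ^ 2) ((k : ℤ) - j)

variable {h t : ℝ}

lemma exp_mul_wterm (j : ℤ) (k : ℕ) :
    Real.exp (-2 * t / h ^ 2) * wterm h j t k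
      = q (t / h ^ 2) k * Q (t / h ^ 2) ((k : ℤ) - j) := by
  unfold wterm Q q
  by_cases hjk : j ≤ (k : ℤ)
  · rw [if_pos hjk, if_pos (by omega)]
    have h2 : (2 * (k : ℤ) - j).toNat = k + ((k : ℤ) - j).toNat := by
      have h1 : (2 * (k : ℤ) - j) = (k : ℤ) + ((k : ℤ) - j) := by ring
      rw [h1, Int.toNat_add (by positivity) (by omega)]
      simp
    rw [h2, pow_add]
    have he : Real.exp (-2 * t / h ^ 2)
        = Real.exp (-(t / h ^ 2)) * Real.exp (-(t / h ^ 2)) := by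
      rw [← Real.exp_add]; ring_nf
    rw [he]
    have hf1 : ((((k : ℤ) - j).toNat.factorial : ℝ)) ≠ 0 := by positivity
    have hf2 : ((k.factorial : ℕ) : ℝ) ≠ 0 := by positivity
    field_simp
  · rw [if_neg hjk, if_neg (by omega), mul_zero, mul_zero]

lemma summable_g (hτ : 0 < τ) (j : ℤ) :
    Summable (fun k : ℕ => q τ k * Q τ ((k : ℤ) - j)) := by
  refine Summable.of_nonneg_of_le
    (fun k => mul_nonneg (q_nonneg hτ.le k) (Q_nonneg hτ.le _))
    (fun k => mul_le_of_le_one_right (q_nonneg hτ.le k) (Q_le_one hτ.le _)) summable_q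

lemma summable_wterm (hh : 0 < h) (ht : 0 < t) (j : ℤ) : Summable (wterm h j t) := by
  have hτ : 0 < t / h ^ 2 := div_pos ht (by positivity)
  have h1 := (summable_g hτ j).mul_left (Real.exp (-2 * t / h ^ 2))⁻¹
  refine h1.congr fun k => ?_
  rw [← exp_mul_wterm, ← mul_assoc, inv_mul_cancel₀ (Real.exp_ne_zero _), one_mul]

lemma h_mul_wker (hh : 0 < h) (ht : 0 < t) (j : ℤ) : h * wker h j t = wI h t j := by
  have hh' : h ≠ 0 := ne_of_gt hh
  calc h * wker h j t = ∑' k : ℕ, Real.exp (-2 * t / h ^ 2) * wterm h j t k := by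
        unfold wker
        rw [tsum_mul_left]
        field_simp
    _ = wI h t j := tsum_congr fun k => exp_mul_wterm j k

lemma wI_nonneg (hh : 0 < h) (ht : 0 < t) (j : ℤ) : 0 ≤ wI h t j := by
  have hτ : 0 < t / h ^ 2 := div_pos ht (by positivity)
  exact tsum_nonneg fun k => mul_nonneg (q_nonneg hτ.le k) (Q_nonneg hτ.le _)

lemma wker_nonneg (hh : 0 < h) (ht : 0 < t) (j : ℤ) : 0 ≤ wker h j t := by
  have := wI_nonneg hh ht j
  rw [← h_mul_wker hh ht j] at this
  nlinarith

lemma Q_natCast (n : ℕ) : Q τ (n : ℤ) = q τ n := by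
  unfold Q
  rw [if_pos (by positivity)]
  simp

lemma Q_neg {m : ℤ} (hm : m < 0) : Q τ m = 0 := by
  unfold Q; rw [if_neg (by omega)]

lemma tsum_ofReal_q (hτ : 0 ≤ τ) : ∑' k : ℕ, ENNReal.ofReal (q τ k) = 1 := by
  rw [← ENNReal.ofReal_tsum_of_nonneg (q_nonneg hτ) summable_q, tsum_q, ENNReal.ofReal_one]

lemma tsum_ofReal_Q (hτ : 0 ≤ τ) : ∑' m : ℤ, ENNReal.ofReal (Q τ m) = 1 := by
  have hinj : Function.Injective (fun n : ℕ => (n : ℤ)) := fun a b hab => by simpa using hab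
  have hsupp : Function.support (fun m : ℤ => ENNReal.ofReal (Q τ m))
      ⊆ Set.range (fun n : ℕ => (n : ℤ)) := by
    intro m hm
    by_contra hc
    have hmneg : m < 0 := by
      rcases lt_or_ge m 0 with h | h
      · exact h
      · exact absurd ⟨m.toNat, by simp; omega⟩ hc
    apply hm
    simp only []
    rw [Q_neg hmneg, ENNReal.ofReal_zero]
  rw [← hinj.tsum_eq hsupp]
  calc ∑' n : ℕ, ENNReal.ofReal (Q τ (n : ℤ)) = ∑' n : ℕ, ENNReal.ofReal (q τ n) :=
        tsum_congr fun n => by rw [Q_natCast]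
    _ = 1 := tsum_ofReal_q hτ

lemma tsum_ofReal_Q_sub (hτ : 0 ≤ τ) (k : ℤ) :
    ∑' j : ℤ, ENNReal.ofReal (Q τ (k - j)) = 1 := by
  have he := (Equiv.subLeft k).tsum_eq (fun m : ℤ => ENNReal.ofReal (Q τ m))
  simp only [Equiv.subLeft_apply] at he
  rw [he]
  exact tsum_ofReal_Q hτ

lemma tsum_ofReal_wI (hh : 0 < h) (ht : 0 < t) :
    ∑' j : ℤ, ENNReal.ofReal (wI h t j) = 1 := by
  set τ := t / h ^ 2 with hτdef
  have hτ : 0 < τ := div_pos ht (by positivity)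
  calc ∑' j : ℤ, ENNReal.ofReal (wI h t j)
      = ∑' (j : ℤ) (k : ℕ), ENNReal.ofReal (q τ k * Q τ ((k : ℤ) - j)) := by
        refine tsum_congr fun j => ?_
        exact ENNReal.ofReal_tsum_of_nonneg
          (fun k => mul_nonneg (q_nonneg hτ.le k) (Q_nonneg hτ.le _)) (summable_g hτ j)
    _ = ∑' (k : ℕ) (j : ℤ), ENNReal.ofReal (q τ k * Q τ ((k : ℤ) - j)) := ENNReal.tsum_comm
    _ = ∑' (k : ℕ), ENNReal.ofReal (q τ k) * ∑' j : ℤ, ENNReal.ofReal (Q τ ((k : ℤ) - j)) := by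
        refine tsum_congr fun k => ?_
        rw [← ENNReal.tsum_mul_left]
        exact tsum_congr fun j => ENNReal.ofReal_mul (q_nonneg hτ.le k)
    _ = ∑' (k : ℕ), ENNReal.ofReal (q τ k) := by
        refine tsum_congr fun k => ?_
        rw [tsum_ofReal_Q_sub hτ.le, mul_one]
    _ = 1 := tsum_ofReal_q hτ.le

lemma abs_Q_diff (hτ : 0 < τ) (n : ℕ) :
    |Q τ ((n : ℤ) - 1) - Q τ (n : ℤ)| = q τ n * |(n : ℝ) - τ| / τ := by
  cases n with
  | zero =>
    have h1 : ((0 : ℕ) : ℤ) - 1 < 0 := by norm_num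
    rw [Q_neg h1, Q_natCast, zero_sub, abs_neg, abs_of_nonneg (q_nonneg hτ.le 0)]
    rw [Nat.cast_zero, zero_sub, abs_neg, abs_of_nonneg hτ.le]
    field_simp
  | succ m =>
    have h1 : ((m + 1 : ℕ) : ℤ) - 1 = ((m : ℕ) : ℤ) := by push_cast; ring
    rw [h1, Q_natCast, Q_natCast]
    have hq := q_succ_mul (τ := τ) m
    have hτ' : τ ≠ 0 := ne_of_gt hτ
    have h2 : q τ m - q τ (m + 1) = q τ (m + 1) * ((m : ℝ) + 1 - τ) / τ := by
      field_simp
      nlinarith [hq]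
    rw [h2, abs_div, abs_mul, abs_of_nonneg (q_nonneg hτ.le (m + 1)), abs_of_nonneg hτ.le]
    push_cast
    ring_nf

lemma tsum_ofReal_Q_diff (hτ : 0 < τ) :
    ∑' m : ℤ, ENNReal.ofReal |Q τ (m - 1) - Q τ m| ≤ ENNReal.ofReal (1 / Real.sqrt τ) := by
  have hinj : Function.Injective (fun n : ℕ => (n : ℤ)) := fun a b hab => by simpa using hab
  have hsupp : Function.support (fun m : ℤ => ENNReal.ofReal |Q τ (m - 1) - Q τ m|)
      ⊆ Set.range (fun n : ℕ => (n : ℤ)) := by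
    intro m hm
    by_contra hc
    have hmneg : m < 0 := by
      rcases lt_or_ge m 0 with hlt | hle
      · exact hlt
      · exact absurd ⟨m.toNat, by simp; omega⟩ hc
    apply hm
    simp only []
    rw [Q_neg (by omega), Q_neg hmneg]
    simp
  rw [← hinj.tsum_eq hsupp]
  have hS : 0 < Real.sqrt τ := Real.sqrt_pos.2 hτ
  calc ∑' n : ℕ, ENNReal.ofReal |Q τ ((n : ℤ) - 1) - Q τ (n : ℤ)|
      = ENNReal.ofReal (∑' n : ℕ, q τ n * |(n : ℝ) - τ| / τ) := by
        rw [ENNReal.ofReal_tsum_of_nonneg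
          (fun n => div_nonneg (mul_nonneg (q_nonneg hτ.le n) (abs_nonneg _)) hτ.le)
          ((summable_abs_q hτ).div_const τ)]
        exact tsum_congr fun n => by rw [abs_Q_diff hτ n]
    _ ≤ ENNReal.ofReal (1 / Real.sqrt τ) := by
        apply ENNReal.ofReal_le_ofReal
        rw [tsum_div_const]
        have hle : (∑' k : ℕ, q τ k * |(k : ℝ) - τ|) / τ ≤ Real.sqrt τ / τ := by
          gcongr
          exact tsum_abs_q hτ
        refine hle.trans (le_of_eq ?_)
        rw [← Real.mul_self_sqrt hτ.le]
        field_simp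
        rw [Real.sqrt_sq hS.le]

lemma abs_Q_sub_le (hτ : 0 ≤ τ) (a b : ℤ) : |Q τ a - Q τ b| ≤ 1 := by
  have h1 := Q_nonneg hτ a
  have h2 := Q_nonneg hτ b
  have h3 := Q_le_one hτ a
  have h4 := Q_le_one hτ b
  rw [abs_le]
  constructor <;> nlinarith

lemma ofReal_abs_wI_diff_le (hh : 0 < h) (ht : 0 < t) (j : ℤ) :
    ENNReal.ofReal |wI h t (j + 1) - wI h t j|
      ≤ ∑' k : ℕ, ENNReal.ofReal
          (q (t / h ^ 2) k * |Q (t / h ^ 2) ((k : ℤ) - (j + 1)) - Q (t / h ^ 2) ((k : ℤ) - j)|) := by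
  set τ := t / h ^ 2 with hτdef
  have hτ : 0 < τ := div_pos ht (by positivity)
  have hs1 := summable_g hτ (j + 1)
  have hs2 := summable_g hτ j
  have habs : Summable (fun k : ℕ => q τ k * |Q τ ((k : ℤ) - (j + 1)) - Q τ ((k : ℤ) - j)|) := by
    refine Summable.of_nonneg_of_le (fun k => mul_nonneg (q_nonneg hτ.le k) (abs_nonneg _))
      (fun k => mul_le_of_le_one_right (q_nonneg hτ.le k) (abs_Q_sub_le hτ.le _ _)) summable_q
  have hdiff : wI h t (j + 1) - wI h t j
      = ∑' k : ℕ, (q τ k * Q τ ((k : ℤ) - (j + 1)) - q τ k * Q τ ((k : ℤ) - j)) :=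
    (Summable.tsum_sub hs1 hs2).symm
  have hnorm : Summable (fun k : ℕ =>
      ‖q τ k * Q τ ((k : ℤ) - (j + 1)) - q τ k * Q τ ((k : ℤ) - j)‖) := by
    refine habs.congr fun k => ?_
    rw [Real.norm_eq_abs, ← mul_sub, abs_mul, abs_of_nonneg (q_nonneg hτ.le k)]
  have h1 : |wI h t (j + 1) - wI h t j|
      ≤ ∑' k : ℕ, q τ k * |Q τ ((k : ℤ) - (j + 1)) - Q τ ((k : ℤ) - j)| := by
    rw [hdiff]
    have := norm_tsum_le_tsum_norm hnorm
    rw [Real.norm_eq_abs] at this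
    refine this.trans (le_of_eq (tsum_congr fun k => ?_))
    rw [Real.norm_eq_abs, ← mul_sub, abs_mul, abs_of_nonneg (q_nonneg hτ.le k)]
  calc ENNReal.ofReal |wI h t (j + 1) - wI h t j|
      ≤ ENNReal.ofReal (∑' k : ℕ, q τ k * |Q τ ((k : ℤ) - (j + 1)) - Q τ ((k : ℤ) - j)|) :=
        ENNReal.ofReal_le_ofReal h1
    _ = ∑' k : ℕ, ENNReal.ofReal
          (q τ k * |Q τ ((k : ℤ) - (j + 1)) - Q τ ((k : ℤ) - j)|) :=
        ENNReal.ofReal_tsum_of_nonneg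
          (fun k => mul_nonneg (q_nonneg hτ.le k) (abs_nonneg _)) habs

lemma tsum_ofReal_wI_diff (hh : 0 < h) (ht : 0 < t) :
    ∑' j : ℤ, ENNReal.ofReal |wI h t (j + 1) - wI h t j|
      ≤ ENNReal.ofReal (1 / Real.sqrt (t / h ^ 2)) := by
  set τ := t / h ^ 2 with hτdef
  have hτ : 0 < τ := div_pos ht (by positivity)
  calc ∑' j : ℤ, ENNReal.ofReal |wI h t (j + 1) - wI h t j|
      ≤ ∑' (j : ℤ) (k : ℕ), ENNReal.ofReal
          (q τ k * |Q τ ((k : ℤ) - (j + 1)) - Q τ ((k : ℤ) - j)|) :=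
        ENNReal.tsum_le_tsum fun j => ofReal_abs_wI_diff_le hh ht j
    _ = ∑' (k : ℕ) (j : ℤ), ENNReal.ofReal
          (q τ k * |Q τ ((k : ℤ) - (j + 1)) - Q τ ((k : ℤ) - j)|) := ENNReal.tsum_comm
    _ ≤ ∑' (k : ℕ), ENNReal.ofReal (q τ k) * ENNReal.ofReal (1 / Real.sqrt τ) := by
        refine ENNReal.tsum_le_tsum fun k => ?_
        have hfac : ∑' j : ℤ, ENNReal.ofReal
              (q τ k * |Q τ ((k : ℤ) - (j + 1)) - Q τ ((k : ℤ) - j)|)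
            = ENNReal.ofReal (q τ k) * ∑' j : ℤ,
                ENNReal.ofReal |Q τ ((k : ℤ) - (j + 1)) - Q τ ((k : ℤ) - j)| := by
          rw [← ENNReal.tsum_mul_left]
          exact tsum_congr fun j => ENNReal.ofReal_mul (q_nonneg hτ.le k)
        rw [hfac]
        refine mul_le_mul_right ?_ _
        have hcongr : ∀ j : ℤ, ENNReal.ofReal |Q τ ((k : ℤ) - (j + 1)) - Q τ ((k : ℤ) - j)|
            = (fun m : ℤ => ENNReal.ofReal |Q τ (m - 1) - Q τ m|) ((Equiv.subLeft (k : ℤ)) j) := by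
          intro j
          simp only [Equiv.subLeft_apply]
          rw [show (k : ℤ) - (j + 1) = ((k : ℤ) - j) - 1 by ring]
        rw [tsum_congr hcongr,
          (Equiv.subLeft (k : ℤ)).tsum_eq (fun m : ℤ => ENNReal.ofReal |Q τ (m - 1) - Q τ m|)]
        exact tsum_ofReal_Q_diff hτ
    _ = ENNReal.ofReal (1 / Real.sqrt τ) := by
        rw [ENNReal.tsum_mul_right, tsum_ofReal_q hτ.le, one_mul]

lemma tsum_pi_fin_prod : ∀ (n : ℕ) (F : Fin n → ℤ → ENNReal),
    ∑' j : Fin n → ℤ, ∏ l, F l (j l) = ∏ l, ∑' m : ℤ, F l m := by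
  intro n
  induction n with
  | zero =>
    intro F
    have h1 : ∀ j : Fin 0 → ℤ, ∏ l, F l (j l) = 1 := fun j => by simp
    rw [tsum_congr h1]
    haveI : Unique (Fin 0 → ℤ) := ⟨⟨fun _ => 0⟩, fun f => funext fun i => i.elim0⟩
    rw [tsum_eq_single default (fun b hb => absurd (Subsingleton.elim b default) hb)]
    simp
  | succ n ih =>
    intro F
    rw [← (Fin.consEquiv (fun _ : Fin (n + 1) => ℤ)).tsum_eq, ENNReal.tsum_prod']
    have h1 : ∀ (a : ℤ) (b : Fin n → ℤ),
        ∏ l : Fin (n + 1), F l (((Fin.consEquiv (fun _ : Fin (n + 1) => ℤ)) (a, b)) l)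
          = F 0 a * ∏ l : Fin n, F l.succ (b l) := by
      intro a b
      rw [Fin.prod_univ_succ]
      simp [Fin.consEquiv]
    calc ∑' (a : ℤ) (b : Fin n → ℤ),
          ∏ l : Fin (n + 1), F l (((Fin.consEquiv (fun _ : Fin (n + 1) => ℤ)) (a, b)) l)
        = ∑' (a : ℤ) (b : Fin n → ℤ), F 0 a * ∏ l : Fin n, F l.succ (b l) := by
          exact tsum_congr fun a => tsum_congr fun b => h1 a b
      _ = ∑' (a : ℤ), F 0 a * ∑' (b : Fin n → ℤ), ∏ l : Fin n, F l.succ (b l) := by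
          exact tsum_congr fun a => ENNReal.tsum_mul_left
      _ = (∑' (a : ℤ), F 0 a) * ∑' (b : Fin n → ℤ), ∏ l : Fin n, F l.succ (b l) :=
          ENNReal.tsum_mul_right
      _ = (∑' (a : ℤ), F 0 a) * ∏ l : Fin n, ∑' m : ℤ, F l.succ m := by rw [ih]
      _ = ∏ l : Fin (n + 1), ∑' m : ℤ, F l m :=
          (Fin.prod_univ_succ (fun l : Fin (n + 1) => ∑' m : ℤ, F l m)).symm

variable {d : ℕ}

lemma phiker_add (i : Fin d) (j : Fin d → ℤ) :
    Phiker h (j + gunit i) t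
      = wker h (j i + 1) t * ∏ l ∈ ({i}ᶜ : Finset (Fin d)), wker h (j l) t := by
  unfold Phiker
  rw [Fintype.prod_eq_mul_prod_compl i]
  congr 1
  · simp [gunit]
  · refine Finset.prod_congr rfl fun l hl => ?_
    have hli : l ≠ i := by simpa using hl
    simp [gunit, hli]

lemma phiker_sub (i : Fin d) (j : Fin d → ℤ) :
    Phiker h (j - gunit i) t
      = wker h (j i - 1) t * ∏ l ∈ ({i}ᶜ : Finset (Fin d)), wker h (j l) t := by
  unfold Phiker
  rw [Fintype.prod_eq_mul_prod_compl i]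
  congr 1
  · simp [gunit]
  · refine Finset.prod_congr rfl fun l hl => ?_
    have hli : l ≠ i := by simpa using hl
    simp [gunit, hli]

lemma phiker_self (i : Fin d) (j : Fin d → ℤ) :
    Phiker h j t = wker h (j i) t * ∏ l ∈ ({i}ᶜ : Finset (Fin d)), wker h (j l) t := by
  unfold Phiker
  rw [Fintype.prod_eq_mul_prod_compl i]

lemma card_compl_singleton (i : Fin d) : ({i}ᶜ : Finset (Fin d)).card = d - 1 := by
  rw [Finset.card_compl, Finset.card_singleton, Fintype.card_fin]

lemma prod_wI_compl (hh : 0 < h) (ht : 0 < t) (i : Fin d) (j : Fin d → ℤ) :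
    ∏ l ∈ ({i}ᶜ : Finset (Fin d)), wI h t (j l)
      = h ^ (d - 1) * ∏ l ∈ ({i}ᶜ : Finset (Fin d)), wker h (j l) t := by
  calc ∏ l ∈ ({i}ᶜ : Finset (Fin d)), wI h t (j l)
      = ∏ l ∈ ({i}ᶜ : Finset (Fin d)), (h * wker h (j l) t) :=
        Finset.prod_congr rfl fun l _ => (h_mul_wker hh ht (j l)).symm
    _ = (∏ _l ∈ ({i}ᶜ : Finset (Fin d)), h) * ∏ l ∈ ({i}ᶜ : Finset (Fin d)), wker h (j l) t :=
        Finset.prod_mul_distrib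
    _ = h ^ (d - 1) * ∏ l ∈ ({i}ᶜ : Finset (Fin d)), wker h (j l) t := by
        rw [Finset.prod_const, card_compl_singleton]

lemma abs_wI_diff (hh : 0 < h) (ht : 0 < t) (a b : ℤ) :
    |wI h t a - wI h t b| = h * |wker h a t - wker h b t| := by
  rw [← h_mul_wker hh ht a, ← h_mul_wker hh ht b, ← mul_sub, abs_mul, abs_of_pos hh]

lemma key_real_fwd (hd : 1 ≤ d) (hh : 0 < h) (ht : 0 < t) (i : Fin d) (j : Fin d → ℤ) :
    h ^ d * |h⁻¹ * (Phiker h (j + gunit i) t - Phiker h j t)|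
      = (h⁻¹ * |wI h t (j i + 1) - wI h t (j i)|)
          * ∏ l ∈ ({i}ᶜ : Finset (Fin d)), wI h t (j l) := by
  set P := ∏ l ∈ ({i}ᶜ : Finset (Fin d)), wker h (j l) t with hPdef
  have hP : 0 ≤ P := Finset.prod_nonneg fun l _ => wker_nonneg hh ht (j l)
  have hΔ : Phiker h (j + gunit i) t - Phiker h j t
      = (wker h (j i + 1) t - wker h (j i) t) * P := by
    rw [phiker_add i j, phiker_self i j]; ring
  have hpow : h ^ d = h ^ (d - 1) * h := by
    conv_lhs => rw [show d = (d - 1) + 1 by omega]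
    rw [pow_succ]
  calc h ^ d * |h⁻¹ * (Phiker h (j + gunit i) t - Phiker h j t)|
      = h ^ d * (h⁻¹ * (|wker h (j i + 1) t - wker h (j i) t| * P)) := by
        rw [hΔ, abs_mul, abs_mul, abs_of_nonneg (inv_nonneg.2 hh.le), abs_of_nonneg hP]
    _ = (h⁻¹ * (h * |wker h (j i + 1) t - wker h (j i) t|)) * (h ^ (d - 1) * P) := by
        rw [hpow]; ring
    _ = (h⁻¹ * |wI h t (j i + 1) - wI h t (j i)|)
          * ∏ l ∈ ({i}ᶜ : Finset (Fin d)), wI h t (j l) := by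
        rw [abs_wI_diff hh ht, prod_wI_compl hh ht]

lemma key_real_bwd (hd : 1 ≤ d) (hh : 0 < h) (ht : 0 < t) (i : Fin d) (j : Fin d → ℤ) :
    h ^ d * |h⁻¹ * (Phiker h j t - Phiker h (j - gunit i) t)|
      = (h⁻¹ * |wI h t (j i) - wI h t (j i - 1)|)
          * ∏ l ∈ ({i}ᶜ : Finset (Fin d)), wI h t (j l) := by
  set P := ∏ l ∈ ({i}ᶜ : Finset (Fin d)), wker h (j l) t with hPdef
  have hP : 0 ≤ P := Finset.prod_nonneg fun l _ => wker_nonneg hh ht (j l)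
  have hΔ : Phiker h j t - Phiker h (j - gunit i) t
      = (wker h (j i) t - wker h (j i - 1) t) * P := by
    rw [phiker_sub i j, phiker_self i j]; ring
  have hpow : h ^ d = h ^ (d - 1) * h := by
    conv_lhs => rw [show d = (d - 1) + 1 by omega]
    rw [pow_succ]
  calc h ^ d * |h⁻¹ * (Phiker h j t - Phiker h (j - gunit i) t)|
      = h ^ d * (h⁻¹ * (|wker h (j i) t - wker h (j i - 1) t| * P)) := by
        rw [hΔ, abs_mul, abs_mul, abs_of_nonneg (inv_nonneg.2 hh.le), abs_of_nonneg hP]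
    _ = (h⁻¹ * (h * |wker h (j i) t - wker h (j i - 1) t|)) * (h ^ (d - 1) * P) := by
        rw [hpow]; ring
    _ = (h⁻¹ * |wI h t (j i) - wI h t (j i - 1)|)
          * ∏ l ∈ ({i}ᶜ : Finset (Fin d)), wI h t (j l) := by
        rw [abs_wI_diff hh ht, prod_wI_compl hh ht]

lemma hsum_i_bound (hh : 0 < h) (ht : 0 < t) :
    ∑' m : ℤ, ENNReal.ofReal (h⁻¹ * |wI h t (m + 1) - wI h t m|)
      ≤ ENNReal.ofReal (t ^ (-(1 / 2 : ℝ))) := by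
  have h1 : ∀ m : ℤ, ENNReal.ofReal (h⁻¹ * |wI h t (m + 1) - wI h t m|)
      = ENNReal.ofReal h⁻¹ * ENNReal.ofReal |wI h t (m + 1) - wI h t m| :=
    fun m => ENNReal.ofReal_mul (inv_nonneg.2 hh.le)
  rw [tsum_congr h1, ENNReal.tsum_mul_left]
  have hst : Real.sqrt t ≠ 0 := ne_of_gt (Real.sqrt_pos.2 ht)
  have hsq : Real.sqrt (t / h ^ 2) = Real.sqrt t * (1 / h) := by
    rw [show t / h ^ 2 = t * (1 / h) ^ 2 by field_simp, Real.sqrt_mul ht.le,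
      Real.sqrt_sq (by positivity)]
  calc ENNReal.ofReal h⁻¹ * ∑' m : ℤ, ENNReal.ofReal |wI h t (m + 1) - wI h t m|
      ≤ ENNReal.ofReal h⁻¹ * ENNReal.ofReal (1 / Real.sqrt (t / h ^ 2)) :=
        mul_le_mul_right (tsum_ofReal_wI_diff hh ht) _
    _ = ENNReal.ofReal (h⁻¹ * (1 / Real.sqrt (t / h ^ 2))) :=
        (ENNReal.ofReal_mul (inv_nonneg.2 hh.le)).symm
    _ = ENNReal.ofReal (t ^ (-(1 / 2 : ℝ))) := by
        congr 1
        rw [hsq, Real.rpow_neg ht.le, ← Real.sqrt_eq_rpow]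
        field_simp

end DHK

/-- The first differences of the `d`-dimensional discrete heat
kernel satisfy `‖D_{σi}Φ^h(t)‖_{L¹_h} ≤ C t^{−1/2}` with `C = C(d)` independent of
the mesh size (`σ = true` is the forward difference). -/
theorem discrete_heat_kernel_diff_L1_bound (d : ℕ) (hd : 1 ≤ d) :
    ∃ C : ℝ, 0 < C ∧
      ∀ h : ℝ, 0 < h → ∀ t : ℝ, 0 < t → ∀ i : Fin d, ∀ σ : Bool,
        ∑' j : Fin d → ℤ,
            ENNReal.ofReal (h ^ d *
              |(if σ then fdiff h i (fun j' => Phiker h j' t)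
                  else bdiff h i (fun j' => Phiker h j' t)) j|) ≤
          ENNReal.ofReal (C * t ^ (-(1 / 2 : ℝ))) := by
  refine ⟨2, two_pos, ?_⟩
  intro h hh t ht i σ
  have hrp : (0 : ℝ) ≤ t ^ (-(1 / 2 : ℝ)) := Real.rpow_nonneg ht.le _
  have hfinal : ENNReal.ofReal (t ^ (-(1 / 2 : ℝ)))
      ≤ ENNReal.ofReal (2 * t ^ (-(1 / 2 : ℝ))) :=
    ENNReal.ofReal_le_ofReal (by nlinarith)
  cases σ with
  | true =>
    rw [if_pos rfl]
    set F : Fin d → ℤ → ENNReal := fun l m =>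
      if l = i then ENNReal.ofReal (h⁻¹ * |DHK.wI h t (m + 1) - DHK.wI h t m|)
      else ENNReal.ofReal (DHK.wI h t m) with hF
    have hFi : ∀ m : ℤ, F i m
        = ENNReal.ofReal (h⁻¹ * |DHK.wI h t (m + 1) - DHK.wI h t m|) := fun m => by
      rw [hF]; simp
    have hFl : ∀ l, l ≠ i → ∀ m : ℤ, F l m = ENNReal.ofReal (DHK.wI h t m) := fun l hl m => by
      rw [hF]; simp [hl]
    have hpt : ∀ j : Fin d → ℤ,
        ENNReal.ofReal (h ^ d * |(fdiff h i (fun j' => Phiker h j' t)) j|)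
          = ∏ l : Fin d, F l (j l) := by
      intro j
      have e1 : (fdiff h i (fun j' => Phiker h j' t)) j
          = h⁻¹ * (Phiker h (j + gunit i) t - Phiker h j t) := by
        simp [fdiff, smul_eq_mul]
      rw [e1, DHK.key_real_fwd hd hh ht i j, ENNReal.ofReal_mul (by positivity),
        ENNReal.ofReal_prod_of_nonneg (fun l _ => DHK.wI_nonneg hh ht (j l)),
        Fintype.prod_eq_mul_prod_compl i (fun l => F l (j l))]
      congr 1
      · exact (hFi (j i)).symm
      · refine Finset.prod_congr rfl fun l hl => ?_
        have hli : l ≠ i := by simpa using hl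
        exact (hFl l hli (j l)).symm
    rw [tsum_congr hpt, DHK.tsum_pi_fin_prod d F,
      Fintype.prod_eq_mul_prod_compl i (fun l => ∑' m : ℤ, F l m)]
    have hone : ∏ l ∈ ({i}ᶜ : Finset (Fin d)), ∑' m : ℤ, F l m = 1 :=
      Finset.prod_eq_one fun l hl => by
        have hli : l ≠ i := by simpa using hl
        rw [tsum_congr (hFl l hli)]
        exact DHK.tsum_ofReal_wI hh ht
    rw [hone, mul_one, tsum_congr hFi]
    exact (DHK.hsum_i_bound hh ht).trans hfinal
  | false =>
    rw [if_neg (by simp)]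
    set F : Fin d → ℤ → ENNReal := fun l m =>
      if l = i then ENNReal.ofReal (h⁻¹ * |DHK.wI h t m - DHK.wI h t (m - 1)|)
      else ENNReal.ofReal (DHK.wI h t m) with hF
    have hFi : ∀ m : ℤ, F i m
        = ENNReal.ofReal (h⁻¹ * |DHK.wI h t m - DHK.wI h t (m - 1)|) := fun m => by
      rw [hF]; simp
    have hFl : ∀ l, l ≠ i → ∀ m : ℤ, F l m = ENNReal.ofReal (DHK.wI h t m) := fun l hl m => by
      rw [hF]; simp [hl]
    have hpt : ∀ j : Fin d → ℤ,
        ENNReal.ofReal (h ^ d * |(bdiff h i (fun j' => Phiker h j' t)) j|)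
          = ∏ l : Fin d, F l (j l) := by
      intro j
      have e1 : (bdiff h i (fun j' => Phiker h j' t)) j
          = h⁻¹ * (Phiker h j t - Phiker h (j - gunit i) t) := by
        simp [bdiff, smul_eq_mul]
      rw [e1, DHK.key_real_bwd hd hh ht i j, ENNReal.ofReal_mul (by positivity),
        ENNReal.ofReal_prod_of_nonneg (fun l _ => DHK.wI_nonneg hh ht (j l)),
        Fintype.prod_eq_mul_prod_compl i (fun l => F l (j l))]
      congr 1
      · exact (hFi (j i)).symm
      · refine Finset.prod_congr rfl fun l hl => ?_
        have hli : l ≠ i := by simpa using hl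
        exact (hFl l hli (j l)).symm
    rw [tsum_congr hpt, DHK.tsum_pi_fin_prod d F,
      Fintype.prod_eq_mul_prod_compl i (fun l => ∑' m : ℤ, F l m)]
    have hone : ∏ l ∈ ({i}ᶜ : Finset (Fin d)), ∑' m : ℤ, F l m = 1 :=
      Finset.prod_eq_one fun l hl => by
        have hli : l ≠ i := by simpa using hl
        rw [tsum_congr (hFl l hli)]
        exact DHK.tsum_ofReal_wI hh ht
    rw [hone, mul_one, tsum_congr hFi]
    have hshift : ∑' m : ℤ, ENNReal.ofReal (h⁻¹ * |DHK.wI h t m - DHK.wI h t (m - 1)|)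
        = ∑' m : ℤ, ENNReal.ofReal (h⁻¹ * |DHK.wI h t (m + 1) - DHK.wI h t m|) := by
      have he := (Equiv.subRight (1 : ℤ)).tsum_eq
        (fun m : ℤ => ENNReal.ofReal (h⁻¹ * |DHK.wI h t (m + 1) - DHK.wI h t m|))
      rw [← he]
      refine tsum_congr fun m => ?_
      simp only [Equiv.subRight_apply, sub_add_cancel]
    rw [hshift]
    exact (DHK.hsum_i_bound hh ht).trans hfinal
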